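/- Let F : ℝⁿ → ℝ be L-smooth and bounded in gradient norm by M > 0 on an open set containing the iterates. Let C ⊆ ℝⁿ be closed convex, α > 0, and let x_{k+1} = Q_{S_k}(x_k) be the SPGD iterate with sample set S_k. If E_k‖R_{S_k}(x_k)‖² ≤ (1+ν²)‖R(x_k)‖² and ‖E_k[Q_{S_k}(x_k) − Q(x_k)]‖ ≤ (γ²/2)‖Q(x_k)−x_k‖², then E_k[F(x_{k+1})] − F(x_k) ≤ −c‖Q(x_k)−x_k‖² with c = 1/α − (L/2)(1+ν²) − (M/2)γ². In particular, if α ≤ 2/(Mγ² + L(1+ν²)), then E_k[F(x_{k+1})] ≤ F(x_k). -/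

import Mathlib

open MeasureTheory
open scoped RealInnerProductSpace

open intervalIntegral in
lemma descent_lemma {n : ℕ} (F : EuclideanSpace ℝ (Fin n) → ℝ) (hF_diff : ContDiff ℝ 1 F)
    (L : ℝ) (hL : 0 ≤ L)
    (hF_smooth : ∀ x y, ‖gradient F x - gradient F y‖ ≤ L * ‖x - y‖)
    (x y : EuclideanSpace ℝ (Fin n)) :
    F y ≤ F x + ⟪gradient F x, y - x⟫ + L / 2 * ‖y - x‖ ^ 2 := by
  have hdF : Differentiable ℝ F := hF_diff.differentiable one_ne_zero
  set v := y - x with hv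
  set ℓ : ℝ → EuclideanSpace ℝ (Fin n) := fun t => x + t • v with hℓ
  set φ : ℝ → ℝ := fun t => ⟪gradient F (ℓ t), v⟫ with hφ
  have hℓd : ∀ t : ℝ, HasDerivAt ℓ v t := by
    intro t
    simpa [ℓ] using ((hasDerivAt_id t).smul_const v).const_add x
  have hgd : ∀ t : ℝ, HasDerivAt (fun t => F (ℓ t)) (φ t) t := by
    intro t
    have h1 : HasFDerivAt F (InnerProductSpace.toDual ℝ _ (gradient F (ℓ t))) (ℓ t) :=
      (hdF (ℓ t)).hasGradientAt.hasFDerivAt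
    have := h1.comp_hasDerivAt t (hℓd t)
    simp [φ, InnerProductSpace.toDual_apply_apply] at this ⊢; exact this
  have hgradcont : Continuous (fun z => gradient F z) := by
    have : Continuous (fun z => fderiv ℝ F z) := hF_diff.continuous_fderiv one_ne_zero
    exact (InnerProductSpace.toDual ℝ _).symm.continuous.comp this
  have hφcont : Continuous φ := by
    apply Continuous.inner (hgradcont.comp (continuous_const.add (continuous_id.smul continuous_const))) continuous_const
  have hFTC : F y - F x = ∫ t in (0:ℝ)..1, φ t := by
    have := integral_eq_sub_of_hasDerivAt (f := fun t => F (ℓ t)) (f' := φ)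
      (fun t _ => hgd t) (hφcont.intervalIntegrable 0 1)
    simp only [ℓ] at this
    have hxy : x + (1:ℝ) • v = y := by simp [v]
    have hx0 : x + (0:ℝ) • v = x := by simp
    rw [hxy, hx0] at this
    exact this.symm
  have hbound : ∀ t ∈ Set.Icc (0:ℝ) 1, φ t ≤ φ 0 + (L * ‖v‖ ^ 2) * t := by
    intro t ht
    have h0 : ℓ 0 = x := by simp [ℓ]
    have h1 : φ t - φ 0 = ⟪gradient F (ℓ t) - gradient F x, v⟫ := by
      simp only [φ, h0, ← inner_sub_left]
    have h2 : ⟪gradient F (ℓ t) - gradient F x, v⟫ ≤ ‖gradient F (ℓ t) - gradient F x‖ * ‖v‖ :=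
      real_inner_le_norm _ _
    have h3 : ‖gradient F (ℓ t) - gradient F x‖ ≤ L * (t * ‖v‖) := by
      have := hF_smooth (ℓ t) x
      simpa [ℓ, norm_smul, abs_of_nonneg ht.1] using this
    have h4 := mul_le_mul_of_nonneg_right h3 (norm_nonneg v)
    have h5 : L * (t * ‖v‖) * ‖v‖ = L * ‖v‖ ^ 2 * t := by ring
    linarith
  have hint : ∫ t in (0:ℝ)..1, φ t ≤ ∫ t in (0:ℝ)..1, (φ 0 + (L * ‖v‖ ^ 2) * t) := by
    apply integral_mono_on (by norm_num) (hφcont.intervalIntegrable 0 1)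
      ((continuous_const.add ((continuous_const.mul continuous_id))).intervalIntegrable 0 1) hbound
  have hval : ∫ t in (0:ℝ)..1, (φ 0 + (L * ‖v‖ ^ 2) * t) = φ 0 + L / 2 * ‖v‖ ^ 2 := by
    rw [integral_add (continuous_const.intervalIntegrable 0 1)
      ((by fun_prop : Continuous fun t : ℝ => L * ‖v‖ ^ 2 * t).intervalIntegrable 0 1)]
    rw [intervalIntegral.integral_const, intervalIntegral.integral_const_mul, integral_id]
    norm_num
    ring
  have hφ0 : φ 0 = ⟪gradient F x, v⟫ := by simp [φ, ℓ]
  rw [hval, hφ0] at hint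
  linarith [hFTC ▸ hint]



/-- One-step descent of adaptive-sampling SPGD: under the norm condition
`E‖R_S(x)‖² ≤ (1+ν²)‖R x‖²` and the bias condition
`‖E[Q_S(x) − Q x]‖ ≤ (γ²/2)‖Q x − x‖²`, one has
`E[F(x₊)] − F x ≤ −c‖Q x − x‖²` with `c = 1/α − (L/2)(1+ν²) − (M/2)γ²`;
in particular `E[F(x₊)] ≤ F x` whenever `α ≤ 2/(Mγ² + L(1+ν²))`. -/
theorem stmt_9 {n : ℕ} {Ω : Type*} [MeasurableSpace Ω]
    (μ : Measure Ω) [IsProbabilityMeasure μ]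
    (F : EuclideanSpace ℝ (Fin n) → ℝ) (hF_diff : ContDiff ℝ 1 F)
    (L : ℝ) (hL : 0 < L)
    (hF_smooth : ∀ x y, ‖gradient F x - gradient F y‖ ≤ L * ‖x - y‖)
    (C : Set (EuclideanSpace ℝ (Fin n)))
    (hC_ne : C.Nonempty) (hC_closed : IsClosed C) (hC_convex : Convex ℝ C)
    (P : EuclideanSpace ℝ (Fin n) → EuclideanSpace ℝ (Fin n))
    (hP_mem : ∀ y, P y ∈ C)
    (hP_min : ∀ y, ∀ z ∈ C, ‖y - P y‖ ≤ ‖y - z‖)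
    (α : ℝ) (hα : 0 < α)
    (x : EuclideanSpace ℝ (Fin n)) (hx : x ∈ C)
    -- the random subsampled projected-gradient step `x₊ = Q_S(x)`
    (Qs : Ω → EuclideanSpace ℝ (Fin n))
    (hQs_mem : ∀ ω, Qs ω ∈ C)
    (hQs_int : Integrable Qs μ)
    (hFQs_int : Integrable (fun ω => F (Qs ω)) μ)
    (hRs_int : Integrable (fun ω => ‖α⁻¹ • (x - Qs ω)‖ ^ 2) μ)
    -- gradient bound on an open set containing the iterates
    (M : ℝ) (hM : 0 < M) (U : Set (EuclideanSpace ℝ (Fin n))) (hU : IsOpen U)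
    (hxU : x ∈ U) (hQsU : ∀ ω, Qs ω ∈ U)
    (hgrad_bdd : ∀ y ∈ U, ‖gradient F y‖ ≤ M)
    (ν γ : ℝ) (hν : 0 < ν) (hγ : 0 < γ)
    (hnorm : ∫ ω, ‖α⁻¹ • (x - Qs ω)‖ ^ 2 ∂μ ≤
      (1 + ν ^ 2) * ‖α⁻¹ • (x - P (x - α • gradient F x))‖ ^ 2)
    (hbias : ‖∫ ω, (Qs ω - P (x - α • gradient F x)) ∂μ‖ ≤
      γ ^ 2 / 2 * ‖P (x - α • gradient F x) - x‖ ^ 2) :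
    (∫ ω, F (Qs ω) ∂μ) - F x ≤
        -(1 / α - L / 2 * (1 + ν ^ 2) - M / 2 * γ ^ 2) *
          ‖P (x - α • gradient F x) - x‖ ^ 2 ∧
      (α ≤ 2 / (M * γ ^ 2 + L * (1 + ν ^ 2)) → ∫ ω, F (Qs ω) ∂μ ≤ F x) := by
  set c := gradient F x with hc
  set Q := P (x - α • c) with hQ
  set D := ‖Q - x‖ ^ 2 with hD
  have hD0 : 0 ≤ D := sq_nonneg _
  have hcM : ‖c‖ ≤ M := hgrad_bdd x hxU
  -- variational inequality for the projection
  haveI : Nonempty C := ⟨⟨x, hx⟩⟩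
  have hVI : ⟪(x - α • c) - Q, x - Q⟫ ≤ 0 := by
    have h1 : ‖(x - α • c) - Q‖ = ⨅ w : C, ‖(x - α • c) - w‖ := by
      refine le_antisymm (le_ciInf fun w => hP_min _ w w.2) ?_
      exact ciInf_le ⟨0, by rintro _ ⟨w, rfl⟩; exact norm_nonneg _⟩ (⟨Q, hP_mem _⟩ : C)
    exact (norm_eq_iInf_iff_real_inner_le_zero hC_convex (hP_mem _)).1 h1 x hx
  have hVI' : ⟪c, Q - x⟫ ≤ -(1 / α) * D := by
    have hrw : (x - α • c) - Q = (x - Q) - α • c := by abel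
    rw [hrw, inner_sub_left, real_inner_smul_left, real_inner_self_eq_norm_sq] at hVI
    have hxq : ‖x - Q‖ = ‖Q - x‖ := norm_sub_rev _ _
    have h2 : ⟪c, x - Q⟫ = -⟪c, Q - x⟫ := by
      rw [inner_sub_right, inner_sub_right]; ring
    rw [hxq, h2] at hVI
    have : D + α * ⟪c, Q - x⟫ ≤ 0 := by simpa [D] using hVI
    have h3 : ⟪c, Q - x⟫ ≤ -D / α := by
      rw [le_div_iff₀ hα]
      linarith
    calc ⟪c, Q - x⟫ ≤ -D / α := h3
      _ = -(1 / α) * D := by ring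
  -- norm-squared rewriting
  have hsm : ∀ z : EuclideanSpace ℝ (Fin n),
      ‖α⁻¹ • (x - z)‖ ^ 2 = α⁻¹ ^ 2 * ‖z - x‖ ^ 2 := by
    intro z
    rw [norm_smul, norm_sub_rev, mul_pow, Real.norm_eq_abs, sq_abs]
  -- second moment bound
  have h_sq_eq : (fun ω => ‖Qs ω - x‖ ^ 2) = fun ω => α ^ 2 * ‖α⁻¹ • (x - Qs ω)‖ ^ 2 := by
    funext ω
    rw [hsm]
    field_simp
  have h_sq_int : Integrable (fun ω => ‖Qs ω - x‖ ^ 2) μ := by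
    rw [h_sq_eq]; exact hRs_int.const_mul _
  have h_sq_bd : ∫ ω, ‖Qs ω - x‖ ^ 2 ∂μ ≤ (1 + ν ^ 2) * D := by
    rw [h_sq_eq, MeasureTheory.integral_const_mul]
    have h1 : α ^ 2 * ∫ ω, ‖α⁻¹ • (x - Qs ω)‖ ^ 2 ∂μ ≤
        α ^ 2 * ((1 + ν ^ 2) * ‖α⁻¹ • (x - Q)‖ ^ 2) :=
      mul_le_mul_of_nonneg_left hnorm (sq_nonneg α)
    rw [hsm] at h1
    calc α ^ 2 * ∫ ω, ‖α⁻¹ • (x - Qs ω)‖ ^ 2 ∂μ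
        ≤ α ^ 2 * ((1 + ν ^ 2) * (α⁻¹ ^ 2 * ‖Q - x‖ ^ 2)) := h1
      _ = (1 + ν ^ 2) * D := by field_simp; rfl
  -- descent lemma pointwise
  have hdesc : ∀ ω, F (Qs ω) ≤ F x + ⟪c, Qs ω - x⟫ + L / 2 * ‖Qs ω - x‖ ^ 2 :=
    fun ω => descent_lemma F hF_diff L hL.le hF_smooth x (Qs ω)
  have h_inner_int : Integrable (fun ω => ⟪c, Qs ω - x⟫) μ :=
    Integrable.const_inner c (hQs_int.sub (integrable_const x))
  have h_fg_int : Integrable (fun ω => F x + ⟪c, Qs ω - x⟫) μ :=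
    (integrable_const (F x)).add h_inner_int
  have h_sq_int' : Integrable (fun ω => L / 2 * ‖Qs ω - x‖ ^ 2) μ := h_sq_int.const_mul _
  have h_rhs_int : Integrable (fun ω => F x + ⟪c, Qs ω - x⟫ + L / 2 * ‖Qs ω - x‖ ^ 2) μ :=
    h_fg_int.add h_sq_int'
  have h_int_le : ∫ ω, F (Qs ω) ∂μ ≤
      ∫ ω, (F x + ⟪c, Qs ω - x⟫ + L / 2 * ‖Qs ω - x‖ ^ 2) ∂μ :=
    integral_mono hFQs_int h_rhs_int hdesc
  have h_split : ∫ ω, (F x + ⟪c, Qs ω - x⟫ + L / 2 * ‖Qs ω - x‖ ^ 2) ∂μ =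
      F x + (∫ ω, ⟪c, Qs ω - x⟫ ∂μ) + L / 2 * ∫ ω, ‖Qs ω - x‖ ^ 2 ∂μ := by
    rw [integral_add h_fg_int h_sq_int',
      integral_add (integrable_const (F x)) h_inner_int, MeasureTheory.integral_const_mul,
      MeasureTheory.integral_const]
    simp
  -- inner term
  have h_inner_eq : ∫ ω, ⟪c, Qs ω - x⟫ ∂μ = ⟪c, ∫ ω, (Qs ω - x) ∂μ⟫ :=
    integral_inner (hQs_int.sub (integrable_const x)) c
  have h_mean_split : ∫ ω, (Qs ω - x) ∂μ = (∫ ω, (Qs ω - Q) ∂μ) + (Q - x) := by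
    rw [integral_sub hQs_int (integrable_const x), integral_sub hQs_int (integrable_const Q),
      MeasureTheory.integral_const, MeasureTheory.integral_const]
    simp
  have h_inner_bd : ∫ ω, ⟪c, Qs ω - x⟫ ∂μ ≤ M * (γ ^ 2 / 2 * D) + -(1 / α) * D := by
    rw [h_inner_eq, h_mean_split, inner_add_right]
    have h1 : ⟪c, ∫ ω, (Qs ω - Q) ∂μ⟫ ≤ M * (γ ^ 2 / 2 * D) := by
      calc ⟪c, ∫ ω, (Qs ω - Q) ∂μ⟫ ≤ ‖c‖ * ‖∫ ω, (Qs ω - Q) ∂μ‖ := real_inner_le_norm _ _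
        _ ≤ M * (γ ^ 2 / 2 * D) := by
            apply mul_le_mul hcM hbias (norm_nonneg _) hM.le
    linarith [hVI']
  -- combine
  have hmain : (∫ ω, F (Qs ω) ∂μ) - F x ≤
      -(1 / α - L / 2 * (1 + ν ^ 2) - M / 2 * γ ^ 2) * D := by
    have h2 : L / 2 * ∫ ω, ‖Qs ω - x‖ ^ 2 ∂μ ≤ L / 2 * ((1 + ν ^ 2) * D) :=
      mul_le_mul_of_nonneg_left h_sq_bd (by linarith)
    have h3 := h_int_le.trans_eq h_split
    linarith
  refine ⟨hmain, fun hαle => ?_⟩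
  have hS : 0 < M * γ ^ 2 + L * (1 + ν ^ 2) := by positivity
  have h1α : (M * γ ^ 2 + L * (1 + ν ^ 2)) / 2 ≤ 1 / α := by
    rw [div_le_div_iff₀ (by norm_num) hα]
    rw [le_div_iff₀ hS] at hαle
    linarith
  have hcnn : 0 ≤ 1 / α - L / 2 * (1 + ν ^ 2) - M / 2 * γ ^ 2 := by linarith
  have h4 : -(1 / α - L / 2 * (1 + ν ^ 2) - M / 2 * γ ^ 2) * D ≤ 0 := by
    rw [neg_mul]
    exact neg_nonpos.2 (mul_nonneg hcnn hD0)
  linarith
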